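/- Interval model flow condition (Example 2.4): let A be a differential graded Lie algebra over a field k of characteristic zero, let a and b be points of A, and let e ∈ A_0 have nilpotent adjoint action E := ad_e and satisfy ∂e = −Σ_{i≥0} (B_i/i!) E^i(a) + Σ_{i≥0} (B_i/i!) (−E)^i(b), where B_i are the Bernoulli numbers (equivalently, ∂e = (E/(1−e^E))(a) + (E/(1−e^{−E}))(b), the operators interpreted as the corresponding power series in E, which are finite sums by nilpotency). Then u_e(a) = b, i.e. the flow by e carries a to b in unit time. -/

import Mathlib

/-- A differential graded Lie algebra (DGLA) over a field `k` of characteristic zero: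
a `ℤ`-graded `k`-vector space `A = ⊕ₙ Aₙ` with a bilinear bracket respecting the grading,
graded antisymmetry, the graded Jacobi identity, and a differential `∂` of degree `-1`
with `∂ ∘ ∂ = 0` satisfying the graded Leibniz rule. -/
class DGLA (k : Type*) (A : Type*) [Field k] [CharZero k]
    [AddCommGroup A] [Module k A] where
  bracket : A →ₗ[k] A →ₗ[k] A
  grading : ℤ → Submodule k A
  isInternal : DirectSum.IsInternal grading
  bracket_mem : ∀ (m n : ℤ) (a b : A), a ∈ grading m → b ∈ grading n →
    bracket a b ∈ grading (m + n)
  bracket_antisymm : ∀ (m n : ℤ) (a b : A), a ∈ grading m → b ∈ grading n →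
    bracket b a = -(((-1 : k) ^ (m * n)) • bracket a b)
  jacobi : ∀ (l m n : ℤ) (a b c : A), a ∈ grading l → b ∈ grading m → c ∈ grading n →
    ((-1 : k) ^ (l * m)) • bracket (bracket b c) a
      + ((-1 : k) ^ (m * n)) • bracket (bracket c a) b
      + ((-1 : k) ^ (n * l)) • bracket (bracket a b) c = 0
  d : A →ₗ[k] A
  d_mem : ∀ (n : ℤ) (a : A), a ∈ grading n → d a ∈ grading (n - 1)
  d_sq : ∀ a : A, d (d a) = 0
  leibniz : ∀ (m : ℤ) (a b : A), a ∈ grading m →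
    d (bracket a b) = bracket (d a) b + ((-1 : k) ^ m) • bracket a (d b)

namespace DGLA

variable (k : Type*) {A : Type*} [Field k] [CharZero k] [AddCommGroup A] [Module k A]
  [DGLA k A]

/-- The differential `∂` of the DGLA. -/
noncomputable def D : A →ₗ[k] A := DGLA.d (k := k) (A := A)

/-- The bracket `[x, y]` of the DGLA. -/
noncomputable def br (x y : A) : A := DGLA.bracket (k := k) (A := A) x y

/-- The `n`-th graded piece `Aₙ`. -/
noncomputable def gr (n : ℤ) : Submodule k A := DGLA.grading (k := k) (A := A) n

/-- The adjoint operator `ad_x = [x, ·]`. -/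
noncomputable def ad (x : A) : Module.End k A := DGLA.bracket (k := k) (A := A) x

/-- A *point*: an element of `A₋₁` satisfying the Maurer–Cartan equation
`∂a + (1/2)[a,a] = 0`. -/
def IsPoint (a : A) : Prop :=
  a ∈ gr k (-1) ∧ D k a + (2⁻¹ : k) • br k a a = 0

/-- The twisted differential `∂_a = ∂ + ad_a`. -/
noncomputable def twistD (a : A) : Module.End k A := D k + ad k a

/-- The curvature `κ(a) = ∂a + (1/2)[a,a]`. -/
noncomputable def curv (a : A) : A := D k a + (2⁻¹ : k) • br k a a

/-- The truncated operator power series `Σ_{n<N} (−1)ⁿ fⁿ/n!`; when `f^N = 0` this is the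
exponential `exp(−f)` (a finite sum by nilpotency). -/
noncomputable def expNeg (f : Module.End k A) (N : ℕ) : Module.End k A :=
  ∑ n ∈ Finset.range N, ((-1 : k) ^ n * (Nat.factorial n : k)⁻¹) • f ^ n

/-- The truncated operator power series `F(f) = Σ_{n<N} (−1)ⁿ fⁿ/(n+1)!`; when `f^N = 0`
this is the power series of `(1 − e^{−T})/T` evaluated at `f` (a finite sum by nilpotency). -/
noncomputable def Fser (f : Module.End k A) (N : ℕ) : Module.End k A :=
  ∑ n ∈ Finset.range N, ((-1 : k) ^ n * (Nat.factorial (n + 1) : k)⁻¹) • f ^ n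

/-- The time-one flow `u_e(a) := exp(−ad_e)(a) + F(ad_e)(∂e)` of `e ∈ A₀` applied to
`a ∈ A₋₁`, truncated at order `N` (exact when `(ad_e)^N = 0`). -/
noncomputable def flow (e : A) (N : ℕ) (a : A) : A :=
  expNeg k (ad k e) N a + Fser k (ad k e) N (D k e)

end DGLA


open PowerSeries

section TrEval

variable {k A : Type*} [Field k] [CharZero k] [AddCommGroup A] [Module k A]

/-- Truncated evaluation of a power series at an endomorphism. -/
noncomputable def trEval (f : Module.End k A) (N : ℕ) (P : PowerSeries k) : Module.End k A :=
  ∑ n ∈ Finset.range N, (PowerSeries.coeff n P) • f ^ n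

lemma pow_zero_of_le' {f : Module.End k A} {N m : ℕ} (hN : f ^ N = 0) (h : N ≤ m) :
    f ^ m = 0 := by
  obtain ⟨d, rfl⟩ := Nat.exists_eq_add_of_le h
  rw [pow_add, hN, zero_mul]

lemma aeval_eq_tr {f : Module.End k A} {N : ℕ} (hN : f ^ N = 0) (p : Polynomial k) :
    Polynomial.aeval f p = ∑ n ∈ Finset.range N, p.coeff n • f ^ n := by
  rw [Polynomial.aeval_eq_sum_range' (n := max N (p.natDegree + 1))
    (lt_of_lt_of_le (Nat.lt_succ_self _) (le_max_right _ _)) f]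
  symm
  apply Finset.sum_subset (Finset.range_subset_range.2 (le_max_left _ _))
  intro i _ hi
  rw [Finset.mem_range, not_lt] at hi
  rw [pow_zero_of_le' hN hi, smul_zero]

lemma trEval_eq_aeval {f : Module.End k A} {N : ℕ} (hN : f ^ N = 0) (P : PowerSeries k) :
    trEval f N P = Polynomial.aeval f (PowerSeries.trunc N P) := by
  rw [aeval_eq_tr hN]
  apply Finset.sum_congr rfl
  intro n hn
  rw [Finset.mem_range] at hn
  rw [PowerSeries.coeff_trunc, if_pos hn]

lemma trEval_mul {f : Module.End k A} {N : ℕ} (hN : f ^ N = 0) (P Q : PowerSeries k) :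
    trEval f N (P * Q) = trEval f N P * trEval f N Q := by
  rw [trEval_eq_aeval hN, trEval_eq_aeval hN, trEval_eq_aeval hN, ← map_mul]
  rw [aeval_eq_tr hN, aeval_eq_tr hN]
  apply Finset.sum_congr rfl
  intro n hn
  rw [Finset.mem_range] at hn
  congr 1
  rw [PowerSeries.coeff_trunc, if_pos hn, Polynomial.coeff_mul, PowerSeries.coeff_mul]
  apply Finset.sum_congr rfl
  intro p hp
  rw [Finset.HasAntidiagonal.mem_antidiagonal] at hp
  have hp1 : p.1 < N := lt_of_le_of_lt (le_trans (Nat.le_add_right _ _) hp.le) hn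
  have hp2 : p.2 < N := lt_of_le_of_lt (le_trans (Nat.le_add_left _ _) hp.le) hn
  rw [PowerSeries.coeff_trunc, if_pos hp1, PowerSeries.coeff_trunc, if_pos hp2]

lemma trEval_one {f : Module.End k A} {N : ℕ} (hN : f ^ N = 0) :
    trEval f N (1 : PowerSeries k) = 1 := by
  cases N with
  | zero => simpa [trEval] using hN.symm
  | succ M =>
    rw [trEval_eq_aeval hN, PowerSeries.trunc_one, map_one]

end TrEval

section Series

variable (k : Type*) [Field k] [CharZero k]

noncomputable def Fps : PowerSeries k :=
  PowerSeries.mk fun n => (-1 : k) ^ n * ((n + 1).factorial : k)⁻¹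

lemma algebraMap_rat (q : ℚ) : algebraMap ℚ k q = (q : k) := by
  exact eq_ratCast (algebraMap ℚ k) q

lemma coeff_expNegPS (n : ℕ) :
    PowerSeries.coeff n (evalNegHom (exp k)) = (-1 : k) ^ n * (n.factorial : k)⁻¹ := by
  rw [evalNegHom, PowerSeries.coeff_rescale, PowerSeries.coeff_exp, algebraMap_rat]
  push_cast
  ring

lemma Fps_mul_X : Fps k * PowerSeries.X = 1 - evalNegHom (exp k) := by
  ext n
  cases n with
  | zero =>
    have h0 : PowerSeries.constantCoeff (evalNegHom (exp k)) = 1 := by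
      rw [← PowerSeries.coeff_zero_eq_constantCoeff_apply, coeff_expNegPS]; simp
    simp [h0]
  | succ m =>
    rw [PowerSeries.coeff_succ_mul_X, map_sub, coeff_expNegPS]
    simp only [Fps, PowerSeries.coeff_mk, PowerSeries.coeff_one, Nat.succ_ne_zero, if_false,
      zero_sub, pow_succ]
    ring

lemma exp_sub_one_ne_zero : (exp k - 1 : PowerSeries k) ≠ 0 := by
  intro h
  have := congrArg (PowerSeries.coeff (R := k) 1) h
  simp [PowerSeries.coeff_exp, algebraMap_rat] at this

lemma expNeg_sub_one_ne_zero : (evalNegHom (exp k) - 1 : PowerSeries k) ≠ 0 := by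
  intro h
  have := congrArg (PowerSeries.coeff (R := k) 1) h
  rw [map_sub, coeff_expNegPS] at this
  simp at this

lemma Fps_mul_bernoulli : Fps k * bernoulliPowerSeries k = evalNegHom (exp k) := by
  apply mul_right_cancel₀ (exp_sub_one_ne_zero k)
  rw [mul_assoc, bernoulliPowerSeries_mul_exp_sub_one, Fps_mul_X]
  have h : exp k * evalNegHom (exp k) = 1 := exp_mul_exp_neg_eq_one
  linear_combination -h

lemma Fps_mul_bernoulliNeg : Fps k * evalNegHom (bernoulliPowerSeries k) = 1 := by
  apply mul_right_cancel₀ (expNeg_sub_one_ne_zero k)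
  have h1 : evalNegHom (bernoulliPowerSeries k) * (evalNegHom (exp k) - 1) = - PowerSeries.X := by
    rw [show (evalNegHom (exp k) - 1 : PowerSeries k) = evalNegHom (exp k - 1) by
          rw [map_sub, map_one],
      ← map_mul, bernoulliPowerSeries_mul_exp_sub_one, evalNegHom, rescale_neg_one_X]
  rw [mul_assoc, h1, mul_neg, Fps_mul_X, one_mul]
  ring

end Series

open DGLA in
/-- interval model flow condition (Example 2.4). In a DGLA over a field `k` of
characteristic zero, let `a`, `b` be points and let `e ∈ A₀` have nilpotent adjoint action
`E := ad_e` (with `E^N = 0`). If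
`∂e = −Σ_i (B_i/i!) E^i(a) + Σ_i (B_i/i!) (−E)^i(b)`
(the Bernoulli-number power series `E/(1−e^E)` applied to `a` plus `E/(1−e^{−E})` applied to
`b`, finite sums by nilpotency), then `u_e(a) = b`: the flow by `e` carries `a` to `b` in
unit time. -/
theorem interval_flow {k A : Type*} [Field k] [CharZero k]
    [AddCommGroup A] [Module k A] [DGLA k A]
    (a b e : A) (ha : IsPoint k a) (hb : IsPoint k b) (he : e ∈ gr k 0)
    (N : ℕ) (hN : ad k e ^ N = 0)
    (hde : D k e =
      -(∑ i ∈ Finset.range N, ((bernoulli i : k) * (Nat.factorial i : k)⁻¹) •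
          ((ad k e ^ i) a))
      + ∑ i ∈ Finset.range N, ((bernoulli i : k) * (Nat.factorial i : k)⁻¹) •
          (((-1 : k) ^ i) • ((ad k e ^ i) b))) :
    flow k e N a = b := by
  classical
  set E := ad k e with hEdef
  have hG : (∑ i ∈ Finset.range N, ((bernoulli i : k) * (Nat.factorial i : k)⁻¹) •
      ((ad k e ^ i) a)) = trEval E N (bernoulliPowerSeries k) a := by
    rw [trEval, LinearMap.sum_apply]
    apply Finset.sum_congr rfl
    intro i _
    rw [LinearMap.smul_apply]
    congr 1
    rw [bernoulliPowerSeries, PowerSeries.coeff_mk, algebraMap_rat]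
    push_cast
    ring
  have hGm : (∑ i ∈ Finset.range N, ((bernoulli i : k) * (Nat.factorial i : k)⁻¹) •
      (((-1 : k) ^ i) • ((ad k e ^ i) b)))
      = trEval E N (evalNegHom (bernoulliPowerSeries k)) b := by
    rw [trEval, LinearMap.sum_apply]
    apply Finset.sum_congr rfl
    intro i _
    rw [LinearMap.smul_apply, smul_smul]
    congr 1
    rw [evalNegHom, PowerSeries.coeff_rescale, bernoulliPowerSeries, PowerSeries.coeff_mk,
      algebraMap_rat]
    push_cast
    ring
  have hEm : expNeg k E N = trEval E N (evalNegHom (exp k)) := by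
    rw [expNeg, trEval]
    apply Finset.sum_congr rfl
    intro n _
    rw [coeff_expNegPS]
  have hF : Fser k E N = trEval E N (Fps k) := by
    rw [Fser, trEval]
    apply Finset.sum_congr rfl
    intro n _
    rw [Fps, PowerSeries.coeff_mk]
  have key : D k e = -(trEval E N (bernoulliPowerSeries k) a)
      + trEval E N (evalNegHom (bernoulliPowerSeries k)) b := by
    rw [hde, hG, hGm]
  have h1 : trEval E N (Fps k) (trEval E N (bernoulliPowerSeries k) a)
      = trEval E N (evalNegHom (exp k)) a := by
    rw [← Module.End.mul_apply, ← trEval_mul hN, Fps_mul_bernoulli]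
  have h2 : trEval E N (Fps k) (trEval E N (evalNegHom (bernoulliPowerSeries k)) b) = b := by
    rw [← Module.End.mul_apply, ← trEval_mul hN, Fps_mul_bernoulliNeg, trEval_one hN,
      Module.End.one_apply]
  rw [flow, key, hEm, hF, map_add, map_neg, h1, h2]
  abel
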